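/- arXiv:2202.02561 — 2 statements merged into one kernel-verified Lean document; each statement's English description precedes it below -/
import Mathlib

section
/- Assume (F) and (H). Then 𝔐 is Lyapunov stable and globally asymptotically stable for optimal trajectories: (i) for every ε > 0 there exists η > 0 such that for every x with dist(x,𝔐) ≤ η and every optimal control α* for x, dist(y_x^{α*}(t),𝔐) ≤ ε for all t ≥ 0; (ii) for every x ∈ ℝⁿ and every optimal control α* for x, dist(y_x^{α*}(t),𝔐) → 0 as t → +∞. -/
open MeasureTheory Filter Metric Set Topology
open scoped ENNReal

noncomputable section

/-- `n`-dimensional Euclidean space. -/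
abbrev Euc (n : ℕ) := EuclideanSpace ℝ (Fin n)

variable {n : ℕ}

/-- Trajectory of the control system `ẏ = α`, `y 0 = x`. -/
def traj (x : Euc n) (α : ℝ → Euc n) (t : ℝ) : Euc n :=
  x + ∫ s in Set.Ioc (0 : ℝ) t, α s

/-- An admissible control: measurable with `‖α s‖ ≤ 1` for a.e. `s ≥ 0`. -/
def Admissible (α : ℝ → Euc n) : Prop :=
  Measurable α ∧ ∀ᵐ s ∂(volume : Measure ℝ), 0 ≤ s → ‖α s‖ ≤ 1

/-- Hitting time `t_x(α) = inf {s ≥ 0 : y_x^α(s) ∈ M}` (`∞` if the set is empty). -/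
def hitTime (M : Set (Euc n)) (x : Euc n) (α : ℝ → Euc n) : ℝ≥0∞ :=
  ⨅ (s : ℝ) (_ : 0 ≤ s) (_ : traj x α s ∈ M), ENNReal.ofReal s

/-- Cost `∫₀^{t_x(α)} ℓ(y_x^α(s)) ds` of a control (as an extended real, `ℓ ≥ 0`). -/
def cost (M : Set (Euc n)) (l : Euc n → ℝ) (x : Euc n) (α : ℝ → Euc n) : ℝ≥0∞ :=
  ∫⁻ s in {s : ℝ | 0 < s ∧ ENNReal.ofReal s < hitTime M x α},
    ENNReal.ofReal (l (traj x α s))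

/-- The value function (extended-real valued). -/
def valE (M : Set (Euc n)) (l : Euc n → ℝ) (x : Euc n) : ℝ≥0∞ :=
  ⨅ (α : ℝ → Euc n) (_ : Admissible α), cost M l x α

/-- The value function `v`. -/
def val (M : Set (Euc n)) (l : Euc n → ℝ) (x : Euc n) : ℝ := (valE M l x).toReal

/-- A control is optimal for `x` if it is admissible and attains the infimum. -/
def IsOptimal (M : Set (Euc n)) (l : Euc n → ℝ) (x : Euc n) (α : ℝ → Euc n) : Prop :=
  Admissible α ∧ cost M l x α = valE M l x

/-- The viscosity subdifferential `D⁻v(z)`. -/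
def subDiff (v : Euc n → ℝ) (z : Euc n) : Set (Euc n) :=
  {p | ∀ ε > 0, ∀ᶠ x in 𝓝 z, v z + (inner ℝ p (x - z) : ℝ) - ε * ‖x - z‖ ≤ v x}

/-- The viscosity superdifferential `D⁺v(z)`. -/
def superDiff (v : Euc n → ℝ) (z : Euc n) : Set (Euc n) :=
  {p | ∀ ε > 0, ∀ᶠ x in 𝓝 z, v x ≤ v z + (inner ℝ p (x - z) : ℝ) + ε * ‖x - z‖}

/-- The set of limiting gradients `D*v(z)`. -/
def limGrad (v : Euc n → ℝ) (z : Euc n) : Set (Euc n) :=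
  {p | ∃ u : ℕ → Euc n, (∀ k, DifferentiableAt ℝ v (u k)) ∧
    Tendsto u atTop (𝓝 z) ∧ Tendsto (fun k => gradient v (u k)) atTop (𝓝 p)}

/-- Distance of the trajectory to the target, with the trajectory extended so that it
remains in `M` after the hitting time. -/
def extDist (M : Set (Euc n)) (x : Euc n) (α : ℝ → Euc n) (t : ℝ) : ℝ :=
  if ENNReal.ofReal t < hitTime M x α then Metric.infDist (traj x α t) M else 0

end
section myAux

open MeasureTheory Filter Metric Set Topology
open scoped ENNReal

variable {n : ℕ}

lemma adm_intOn {α : ℝ → Euc n} (hα : Admissible α) {a b : ℝ} (ha : 0 ≤ a) :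
    IntegrableOn α (Set.Ioc a b) volume := by
  apply Integrable.mono' (g := fun _ => (1 : ℝ))
  · exact integrableOn_const (by rw [Real.volume_Ioc]; exact ENNReal.ofReal_ne_top)
  · exact hα.1.aestronglyMeasurable.restrict
  · filter_upwards [ae_restrict_of_ae hα.2, ae_restrict_mem measurableSet_Ioc] with s hs hmem
    exact hs (ha.trans hmem.1.le)

lemma traj_zero (x : Euc n) (α : ℝ → Euc n) : traj x α 0 = x := by
  simp [traj]

lemma traj_lip (x : Euc n) {α : ℝ → Euc n} (hα : Admissible α) {t1 t2 : ℝ}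
    (h1 : 0 ≤ t1) (h12 : t1 ≤ t2) : ‖traj x α t2 - traj x α t1‖ ≤ t2 - t1 := by
  have key : traj x α t2 - traj x α t1 = ∫ s in Set.Ioc t1 t2, α s := by
    simp only [traj]
    rw [show Set.Ioc (0:ℝ) t2 = Set.Ioc 0 t1 ∪ Set.Ioc t1 t2 from
      (Set.Ioc_union_Ioc_eq_Ioc h1 h12).symm,
      setIntegral_union (Set.Ioc_disjoint_Ioc_of_le le_rfl) measurableSet_Ioc
        (adm_intOn hα le_rfl) (adm_intOn hα h1)]
    abel
  rw [key]
  calc ‖∫ s in Set.Ioc t1 t2, α s‖ ≤ 1 * (volume (Set.Ioc t1 t2)).toReal := by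
        apply norm_setIntegral_le_of_norm_le_const_ae'
          (by rw [Real.volume_Ioc]; exact ENNReal.ofReal_lt_top)
        · filter_upwards [hα.2] with s hs hmem
          exact hs (h1.trans hmem.1.le)
    _ = t2 - t1 := by rw [one_mul, Real.volume_Ioc, ENNReal.toReal_ofReal (by linarith)]

lemma infDist_traj_lip (M : Set (Euc n)) (x : Euc n) {α : ℝ → Euc n} (hα : Admissible α)
    {t1 t2 : ℝ} (h1 : 0 ≤ t1) (h12 : t1 ≤ t2) :
    |infDist (traj x α t2) M - infDist (traj x α t1) M| ≤ t2 - t1 := by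
  have h := (lipschitz_infDist_pt M).dist_le_mul (traj x α t2) (traj x α t1)
  rw [NNReal.coe_one, one_mul] at h
  calc |infDist (traj x α t2) M - infDist (traj x α t1) M|
      = dist (infDist (traj x α t2) M) (infDist (traj x α t1) M) := (Real.dist_eq _ _).symm
    _ ≤ dist (traj x α t2) (traj x α t1) := h
    _ = ‖traj x α t2 - traj x α t1‖ := dist_eq_norm _ _
    _ ≤ t2 - t1 := traj_lip x hα h1 h12

lemma lint_lower (f : ℝ → ℝ≥0∞) {a b : ℝ} {c : ℝ≥0∞}
    (hbd : ∀ s ∈ Set.Ioc a b, c ≤ f s) :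
    c * ENNReal.ofReal (b - a) ≤ ∫⁻ s in Set.Ioc a b, f s := by
  calc c * ENNReal.ofReal (b - a)
      = ∫⁻ _ in Set.Ioc a b, c := by rw [setLIntegral_const, Real.volume_Ioc]
    _ ≤ ∫⁻ s in Set.Ioc a b, f s := by
        apply lintegral_mono_ae
        filter_upwards [ae_restrict_mem measurableSet_Ioc] with s hs
        exact hbd s hs

lemma cost_lower (M : Set (Euc n)) (l : Euc n → ℝ) (x : Euc n) (α : ℝ → Euc n)
    {a b c : ℝ}
    (hsub : Set.Ioc a b ⊆ {s : ℝ | 0 < s ∧ ENNReal.ofReal s < hitTime M x α})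
    (hbd : ∀ s ∈ Set.Ioc a b, c ≤ l (traj x α s)) :
    ENNReal.ofReal c * ENNReal.ofReal (b - a) ≤ cost M l x α :=
  le_trans (lint_lower _ fun s hs => ENNReal.ofReal_le_ofReal (hbd s hs))
    (lintegral_mono_set hsub)

lemma valE_le (M : Set (Euc n)) (l : Euc n → ℝ) (x : Euc n)
    (hMne : M.Nonempty) (hMcl : IsClosed M) {C : ℝ} (hC0 : 0 ≤ C) (hC : ∀ z, l z ≤ C) :
    valE M l x ≤ ENNReal.ofReal (C * infDist x M) := by
  obtain ⟨p, hpM, hpd⟩ := hMcl.exists_infDist_eq_dist hMne x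
  set d : ℝ := infDist x M with hd
  have hd0 : 0 ≤ d := infDist_nonneg
  rcases eq_or_lt_of_le hd0 with hd0' | hd0'
  · have hxM : x ∈ M := by
      have : infDist x M = 0 := hd0'.symm
      rw [← hMcl.closure_eq]
      exact (mem_closure_iff_infDist_zero hMne).2 this
    have hadm : Admissible (fun _ : ℝ => (0 : Euc n)) := ⟨measurable_const, by
      filter_upwards with s _; simp⟩
    have hht : hitTime M x (fun _ : ℝ => (0 : Euc n)) = 0 := by
      apply le_antisymm _ zero_le
      have : traj x (fun _ : ℝ => (0 : Euc n)) 0 ∈ M := by rwa [traj_zero]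
      exact iInf_le_of_le 0 (iInf_le_of_le le_rfl (iInf_le_of_le this (by simp)))
    have hcost : cost M l x (fun _ : ℝ => (0 : Euc n)) = 0 := by
      have : {s : ℝ | 0 < s ∧ ENNReal.ofReal s < hitTime M x (fun _ : ℝ => (0 : Euc n))}
          = (∅ : Set ℝ) := by
        ext s; simp [hht]
      rw [cost, this, Measure.restrict_empty, lintegral_zero_measure]
    calc valE M l x ≤ cost M l x (fun _ : ℝ => (0 : Euc n)) := iInf₂_le _ hadm
      _ = 0 := hcost
      _ ≤ _ := zero_le
  · have hpx : ‖p - x‖ = d := by rw [norm_sub_rev, ← dist_eq_norm, ← hpd]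
    set u : Euc n := d⁻¹ • (p - x) with hu
    have hunorm : ‖u‖ = 1 := by
      rw [hu, norm_smul, hpx, norm_inv, Real.norm_of_nonneg hd0, inv_mul_cancel₀ hd0'.ne']
    have hadm : Admissible (fun _ : ℝ => u) := ⟨measurable_const, by
      filter_upwards with s _; rw [hunorm]⟩
    have htraj : ∀ t : ℝ, 0 ≤ t → traj x (fun _ : ℝ => u) t = x + t • u := by
      intro t ht
      simp only [traj, setIntegral_const, measureReal_def, Real.volume_Ioc, sub_zero,
        ENNReal.toReal_ofReal ht]
    have hht : hitTime M x (fun _ : ℝ => u) ≤ ENNReal.ofReal d := by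
      have hmem : traj x (fun _ : ℝ => u) d ∈ M := by
        rw [htraj d hd0, hu, smul_smul, mul_inv_cancel₀ hd0'.ne', one_smul,
          add_sub_cancel]
        exact hpM
      exact iInf_le_of_le d (iInf_le_of_le hd0 (iInf_le_of_le hmem le_rfl))
    have hsub : {s : ℝ | 0 < s ∧ ENNReal.ofReal s < hitTime M x (fun _ : ℝ => u)}
        ⊆ Set.Ioc 0 d := by
      rintro s ⟨hs0, hsh⟩
      refine ⟨hs0, ?_⟩
      by_contra hsd
      exact absurd (lt_of_lt_of_le hsh hht) (not_lt.2 (ENNReal.ofReal_le_ofReal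
        (le_of_not_ge hsd)))
    calc valE M l x ≤ cost M l x (fun _ : ℝ => u) := iInf₂_le _ hadm
      _ ≤ ∫⁻ s in Set.Ioc 0 d, ENNReal.ofReal (l (traj x (fun _ : ℝ => u) s)) :=
          lintegral_mono_set hsub
      _ ≤ ∫⁻ _ in Set.Ioc 0 d, ENNReal.ofReal C :=
          lintegral_mono fun s => ENNReal.ofReal_le_ofReal (hC _)
      _ = ENNReal.ofReal C * ENNReal.ofReal d := by
          rw [setLIntegral_const, Real.volume_Ioc, sub_zero]
      _ = ENNReal.ofReal (C * d) := (ENNReal.ofReal_mul hC0).symm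

lemma tail_small (f : ℝ → ℝ≥0∞) (hf : ∫⁻ s in Set.Ioi (0:ℝ), f s ≠ ⊤)
    {ε : ℝ≥0∞} (hε : 0 < ε) : ∃ N : ℕ, ∫⁻ s in Set.Ioi ((N:ℕ):ℝ), f s < ε := by
  set a : ℕ → ℝ≥0∞ := fun k => ∫⁻ s in Set.Ioc ((k:ℕ):ℝ) ((k:ℝ)+1), f s with ha
  have hdisj : ∀ N : ℕ, Pairwise (Function.onFun Disjoint
      (fun i : ℕ => Set.Ioc (((N+i:ℕ)):ℝ) ((((N+i:ℕ)):ℝ)+1))) := by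
    intro N i j hij
    apply Set.Ioc_disjoint_Ioc.2
    rcases hij.lt_or_gt with h | h
    · refine min_le_of_left_le (le_max_of_le_right ?_)
      push_cast
      have : (i:ℝ) + 1 ≤ j := by exact_mod_cast Nat.succ_le_of_lt h
      linarith
    · refine min_le_of_right_le (le_max_of_le_left ?_)
      push_cast
      have : (j:ℝ) + 1 ≤ i := by exact_mod_cast Nat.succ_le_of_lt h
      linarith
  have hIoi : ∀ N : ℕ, Set.Ioi ((N:ℕ):ℝ)
      = ⋃ i : ℕ, Set.Ioc (((N+i:ℕ)):ℝ) ((((N+i:ℕ)):ℝ)+1) := by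
    intro N
    ext s
    simp only [Set.mem_Ioi, Set.mem_iUnion, Set.mem_Ioc]
    constructor
    · intro hs
      have hpos : 0 < s - N := by linarith
      set m : ℕ := ⌈s - (N:ℝ)⌉₊ with hm
      have hm1 : 1 ≤ m := Nat.one_le_iff_ne_zero.2 (by
        intro h0
        have := Nat.ceil_pos.2 hpos
        omega)
      refine ⟨m - 1, ?_, ?_⟩
      · have : ((m - 1 : ℕ) : ℝ) < s - N := Nat.lt_ceil.1 (by omega)
        push_cast
        push_cast at this
        linarith
      · have h1 : s - (N:ℝ) ≤ m := Nat.le_ceil _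
        have h2 : ((m - 1 : ℕ) : ℝ) = (m:ℝ) - 1 := by
          push_cast [Nat.cast_sub hm1]; ring
        push_cast [h2]
        push_cast at h1
        linarith
    · rintro ⟨i, h1, h2⟩
      have : ((N:ℕ):ℝ) ≤ ((N+i:ℕ):ℝ) := by push_cast; linarith [Nat.cast_nonneg (α := ℝ) i]
      linarith
  have key : ∀ N : ℕ, ∫⁻ s in Set.Ioi ((N:ℕ):ℝ), f s = ∑' i : ℕ, a (N + i) := by
    intro N
    rw [hIoi N, Measure.restrict_iUnion (hdisj N) (fun i => measurableSet_Ioc),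
      lintegral_sum_measure]
  have hsum : ∑' k : ℕ, a k ≠ ⊤ := by
    have h0 := key 0
    simp only [Nat.cast_zero, zero_add] at h0
    rw [← h0]
    exact hf
  have := ENNReal.tendsto_sum_nat_add a hsum
  obtain ⟨N, hN⟩ := (this.eventually_lt_const hε).exists
  refine ⟨N, ?_⟩
  rw [key N]
  calc ∑' i : ℕ, a (N + i) = ∑' i : ℕ, a (i + N) := by
        exact tsum_congr fun i => by rw [Nat.add_comm]
    _ < ε := hN

end myAux

theorem stmt17 {n : ℕ} (M : Set (Euc n)) (l : Euc n → ℝ)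
    (hMne : M.Nonempty) (hMcl : IsClosed M)
    (hlc : Continuous l) (hlbd : BddAbove (Set.range l))
    (hlpos : ∀ z ∉ M, 0 < l z) (hlzero : ∀ z ∈ M, l z = 0)
    (γ : ℝ → ℝ)
    (hH : ∀ δ : ℝ, 0 < δ → 0 < γ δ ∧
      γ δ < sInf (l '' {y : Euc n | δ < Metric.infDist y M})) :
    (∀ ε : ℝ, 0 < ε → ∃ η : ℝ, 0 < η ∧ ∀ x : Euc n, Metric.infDist x M ≤ η →
      ∀ α : ℝ → Euc n, IsOptimal M l x α → ∀ t : ℝ, 0 ≤ t → extDist M x α t ≤ ε) ∧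
    (∀ x : Euc n, ∀ α : ℝ → Euc n, IsOptimal M l x α →
      Tendsto (fun t : ℝ => extDist M x α t) atTop (𝓝 0)) := by
  have hl0 : ∀ z, 0 ≤ l z := fun z => by
    by_cases hz : z ∈ M
    · rw [hlzero z hz]
    · exact (hlpos z hz).le
  set C : ℝ := max (sSup (Set.range l)) 1 with hCdef
  have hC1 : (1:ℝ) ≤ C := le_max_right _ _
  have hC0 : (0:ℝ) ≤ C := by linarith
  have hCl : ∀ z, l z ≤ C := fun z => le_max_of_le_left (le_csSup hlbd ⟨z, rfl⟩)
  have hlge : ∀ δ : ℝ, 0 < δ → ∀ z : Euc n, δ < Metric.infDist z M → γ δ ≤ l z := by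
    intro δ hδ z hz
    have h1 := (hH δ hδ).2
    have h2 : sInf (l '' {y : Euc n | δ < Metric.infDist y M}) ≤ l z := by
      apply csInf_le
      · refine ⟨0, ?_⟩
        rintro r ⟨y, -, rfl⟩
        exact hl0 y
      · exact ⟨z, hz, rfl⟩
    linarith
  constructor
  · -- Lyapunov stability
    intro ε hε
    set δ : ℝ := ε/2 with hδdef
    have hδ : 0 < δ := by positivity
    obtain ⟨hγpos, -⟩ := hH δ hδ
    set c : ℝ := γ δ * δ with hcdef
    have hcpos : 0 < c := mul_pos hγpos hδ
    refine ⟨min δ (c/(2*C)), lt_min hδ (by positivity), ?_⟩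
    intro x hx α hαopt t ht
    obtain ⟨hadm, hopt⟩ := hαopt
    simp only [extDist]
    split_ifs with hcond
    swap
    · linarith
    by_contra hcon
    push_neg at hcon
    have hcost_lt : cost M l x α < ENNReal.ofReal c := by
      have h1 : cost M l x α ≤ ENNReal.ofReal (C * Metric.infDist x M) := by
        rw [hopt]; exact valE_le M l x hMne hMcl hC0 hCl
      have hxc : Metric.infDist x M ≤ c/(2*C) := hx.trans (min_le_right _ _)
      have h2 : C * Metric.infDist x M ≤ c/2 := by
        calc C * Metric.infDist x M ≤ C * (c/(2*C)) :=
              mul_le_mul_of_nonneg_left hxc hC0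
          _ = c/2 := by field_simp
      calc cost M l x α ≤ ENNReal.ofReal (C * Metric.infDist x M) := h1
        _ ≤ ENNReal.ofReal (c/2) := ENNReal.ofReal_le_ofReal h2
        _ < ENNReal.ofReal c := (ENNReal.ofReal_lt_ofReal_iff hcpos).2 (by linarith)
    have hg0 : Metric.infDist (traj x α 0) M ≤ δ := by
      rw [traj_zero]; exact hx.trans (min_le_left _ _)
    have hgt : 2*δ < Metric.infDist (traj x α t) M := by
      rw [hδdef]; linarith
    have htδ : δ < t := by
      have h := infDist_traj_lip M x hadm le_rfl ht
      have h' := (abs_le.1 h).2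
      linarith
    have hlow : ENNReal.ofReal c ≤ cost M l x α := by
      have hstep := cost_lower M l x α (a := t - δ) (b := t) (c := γ δ)
        (fun s hs => ⟨by linarith [hs.1],
          lt_of_le_of_lt (ENNReal.ofReal_le_ofReal hs.2) hcond⟩)
        (fun s hs => by
          apply hlge δ hδ
          have h := infDist_traj_lip M x hadm (t1 := s) (t2 := t)
            (by linarith [hs.1]) hs.2
          have h' := (abs_le.1 h).2
          linarith [hs.1])
      rw [show t - (t - δ) = δ by ring] at hstep
      calc ENNReal.ofReal c = ENNReal.ofReal (γ δ) * ENNReal.ofReal δ := by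
            rw [← ENNReal.ofReal_mul hγpos.le]
        _ ≤ cost M l x α := hstep
    exact absurd hlow (not_le.2 hcost_lt)
  · -- asymptotic stability
    intro x α hαopt
    obtain ⟨hadm, hopt⟩ := hαopt
    rw [NormedAddCommGroup.tendsto_nhds_zero]
    intro ε hε
    have hnn : ∀ t, 0 ≤ extDist M x α t := fun t => by
      simp only [extDist]; split_ifs
      exacts [Metric.infDist_nonneg, le_rfl]
    suffices h : ∀ᶠ t : ℝ in atTop, extDist M x α t < ε by
      filter_upwards [h] with t ht
      rwa [Real.norm_of_nonneg (hnn t)]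
    by_cases hT : hitTime M x α < ⊤
    · filter_upwards [eventually_ge_atTop (hitTime M x α).toReal] with t ht
      have ht0 : (0:ℝ) ≤ t := le_trans ENNReal.toReal_nonneg ht
      simp only [extDist]
      rw [if_neg (not_lt.2 ((ENNReal.le_ofReal_iff_toReal_le hT.ne ht0).2 ht))]
      exact hε
    · push_neg at hT
      have hTtop : hitTime M x α = ⊤ := top_le_iff.1 hT
      set δ : ℝ := ε/3 with hδdef
      have hδ : 0 < δ := by positivity
      obtain ⟨hγpos, -⟩ := hH δ hδ
      set f : ℝ → ℝ≥0∞ := fun s => ENNReal.ofReal (l (traj x α s)) with hfdef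
      have hA : {s : ℝ | 0 < s ∧ ENNReal.ofReal s < hitTime M x α} = Set.Ioi (0:ℝ) := by
        ext s
        simp [hTtop, Set.mem_Ioi]
      have hfin : ∫⁻ s in Set.Ioi (0:ℝ), f s ≠ ⊤ := by
        have hc : cost M l x α ≤ ENNReal.ofReal (C * Metric.infDist x M) := by
          rw [hopt]; exact valE_le M l x hMne hMcl hC0 hCl
        have : cost M l x α = ∫⁻ s in Set.Ioi (0:ℝ), f s := by
          rw [cost, hA]
        rw [← this]
        exact (lt_of_le_of_lt hc ENNReal.ofReal_lt_top).ne
      obtain ⟨N, hN⟩ := tail_small f hfin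
        (ε := ENNReal.ofReal (γ δ * δ)) (ENNReal.ofReal_pos.2 (mul_pos hγpos hδ))
      filter_upwards [eventually_ge_atTop ((N:ℝ) ⊔ 0)] with t ht
      have htN : (N:ℝ) ≤ t := le_trans (le_max_left _ _) ht
      have ht0 : (0:ℝ) ≤ t := le_trans (le_max_right _ _) ht
      simp only [extDist]
      rw [if_pos (by rw [hTtop]; exact ENNReal.ofReal_lt_top)]
      by_contra hcon
      push_neg at hcon
      have hgt : 2*δ < Metric.infDist (traj x α t) M := by
        have : 2*δ < ε := by rw [hδdef]; linarith
        linarith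
      have hbd : ∀ s ∈ Set.Ioc t (t+δ), ENNReal.ofReal (γ δ) ≤ f s := by
        intro s hs
        apply ENNReal.ofReal_le_ofReal
        apply hlge δ hδ
        have h := infDist_traj_lip M x hadm (t1 := t) (t2 := s) ht0 hs.1.le
        have h' := (abs_le.1 h).1
        linarith [hs.2]
      have hlow : ENNReal.ofReal (γ δ * δ) ≤ ∫⁻ s in Set.Ioi ((N:ℝ)), f s := by
        calc ENNReal.ofReal (γ δ * δ)
            = ENNReal.ofReal (γ δ) * ENNReal.ofReal (t + δ - t) := by
              rw [← ENNReal.ofReal_mul hγpos.le, show t + δ - t = δ by ring]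
          _ ≤ ∫⁻ s in Set.Ioc t (t+δ), f s := lint_lower f hbd
          _ ≤ ∫⁻ s in Set.Ioi ((N:ℝ)), f s :=
              lintegral_mono_set fun s hs => lt_of_le_of_lt htN hs.1
      exact absurd hN (not_lt.2 hlow)
end

section
/- Assume ℓ(x) = √(2(f(x) − f̲)) where f satisfies assumptions (A) and (B) with 𝔐 = {f = f̲}, assume (H) holds for ℓ, and assume there exist c, r > 0 and β ∈ (0, 3/2) such that ℓ(x) ≥ c · dist(x,𝔐)^β whenever dist(x,𝔐) ≤ r. Then for every x ∈ ℝⁿ and every optimal control α* for x the hitting time t_x(α*) is finite; moreover there exist constants C > 0 and r₀ > 0 such that whenever dist(x,𝔐) ≤ r₀, one has t_x(α*) ≤ (C / (1 − 2β/3)) · dist(x,𝔐)^{3/2 − β}. -/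
open MeasureTheory Filter Metric Set Topology
open scoped ENNReal

/-- The target set `𝔐 = argmin f` for the eikonal problem arising from `f`. -/
def MOf {n : ℕ} (f : Euc n → ℝ) (flo : ℝ) : Set (Euc n) := {z | f z = flo}

/-- The running cost `ℓ(x) = √(2(f(x) - f̲))`. -/
noncomputable def lOf {n : ℕ} (f : Euc n → ℝ) (flo : ℝ) (z : Euc n) : ℝ :=
  Real.sqrt (2 * (f z - flo))

noncomputable section

namespace S19

variable {n : ℕ}

/-! ### Trajectory basics -/

theorem adm_aebound {α : ℝ → Euc n} (hα : Admissible α) {a b : ℝ} (ha : 0 ≤ a) :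
    ∀ᵐ s ∂(volume.restrict (Set.Ioc a b)), ‖α s‖ ≤ 1 := by
  refine (ae_restrict_iff' measurableSet_Ioc).2 ?_
  filter_upwards [hα.2] with s hs hmem
  exact hs (le_trans ha hmem.1.le)

theorem adm_integrableOn {α : ℝ → Euc n} (hα : Admissible α) {a b : ℝ} (ha : 0 ≤ a) :
    IntegrableOn α (Set.Ioc a b) := by
  have hmeas : AEStronglyMeasurable α (volume.restrict (Set.Ioc a b)) :=
    (hα.1.stronglyMeasurable).aestronglyMeasurable
  refine Integrable.mono' (integrable_const (1:ℝ)) hmeas (adm_aebound hα ha)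

theorem adm_intervalIntegrable {α : ℝ → Euc n} (hα : Admissible α) {a b : ℝ}
    (ha : 0 ≤ a) (hab : a ≤ b) : IntervalIntegrable α volume a b :=
  (intervalIntegrable_iff_integrableOn_Ioc_of_le hab).2 (adm_integrableOn hα ha)

theorem traj_nonpos (x : Euc n) (α : ℝ → Euc n) {t : ℝ} (ht : t ≤ 0) :
    traj x α t = x := by
  simp [traj, Set.Ioc_eq_empty_of_le ht]

theorem traj_eq_interval (x : Euc n) (α : ℝ → Euc n) {t : ℝ} (ht : 0 ≤ t) :
    traj x α t = x + ∫ s in (0:ℝ)..t, α s := by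
  rw [traj, intervalIntegral.integral_of_le ht]

theorem traj_sub {α : ℝ → Euc n} (hα : Admissible α) (x : Euc n) {s t : ℝ}
    (hs : 0 ≤ s) (hst : s ≤ t) :
    traj x α t = traj x α s + ∫ u in s..t, α u := by
  rw [traj_eq_interval x α (hs.trans hst), traj_eq_interval x α hs, add_assoc]
  congr 1
  rw [← intervalIntegral.integral_add_adjacent_intervals
    (adm_intervalIntegrable hα le_rfl hs) (adm_intervalIntegrable hα hs hst)]

theorem traj_dist {α : ℝ → Euc n} (hα : Admissible α) (x : Euc n) {s t : ℝ}
    (hs : 0 ≤ s) (hst : s ≤ t) :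
    ‖traj x α t - traj x α s‖ ≤ t - s := by
  rw [traj_sub hα x hs hst, add_sub_cancel_left, intervalIntegral.integral_of_le hst]
  calc ‖∫ u in Set.Ioc s t, α u‖ ≤ ∫ u in Set.Ioc s t, ‖α u‖ :=
        norm_integral_le_integral_norm _
    _ ≤ ∫ _u in Set.Ioc s t, (1:ℝ) :=
        integral_mono_ae ((adm_integrableOn hα hs).norm) (integrable_const _)
          (adm_aebound hα hs)
    _ = t - s := by simp [Real.volume_Ioc, hst]

theorem traj_dist0 {α : ℝ → Euc n} (hα : Admissible α) (x : Euc n) {t : ℝ} (ht : 0 ≤ t) :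
    ‖traj x α t - x‖ ≤ t := by
  have := traj_dist hα x le_rfl ht
  rwa [traj_nonpos x α le_rfl, sub_zero] at this

theorem lipschitz_traj {α : ℝ → Euc n} (hα : Admissible α) (x : Euc n) :
    LipschitzWith 1 (traj x α) := by
  apply LipschitzWith.of_dist_le_mul
  have key : ∀ a b : ℝ, a ≤ b → dist (traj x α b) (traj x α a) ≤ b - a := by
    intro a b hab
    rcases le_or_gt b 0 with hb | hb
    · rw [traj_nonpos x α hb, traj_nonpos x α (hab.trans hb)]
      simpa using sub_nonneg.2 hab
    rcases le_or_gt a 0 with ha | ha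
    · rw [traj_nonpos x α ha, dist_eq_norm]
      have := traj_dist hα x le_rfl hb.le
      rw [traj_nonpos x α le_rfl] at this
      calc ‖traj x α b - x‖ ≤ b - 0 := by simpa using this
        _ ≤ b - a := by linarith
    · rw [dist_eq_norm]
      exact traj_dist hα x ha.le hab
  intro a b
  rcases le_total a b with h | h
  · rw [dist_comm]
    calc dist (traj x α b) (traj x α a) ≤ b - a := key a b h
      _ ≤ 1 * dist a b := by rw [one_mul, Real.dist_eq, abs_sub_comm]; exact le_abs_self _
  · calc dist (traj x α a) (traj x α b) ≤ a - b := key b a h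
      _ ≤ 1 * dist a b := by rw [one_mul, Real.dist_eq]; exact le_abs_self _

theorem continuous_traj {α : ℝ → Euc n} (hα : Admissible α) (x : Euc n) :
    Continuous (traj x α) := (lipschitz_traj hα x).continuous

/-! ### hitTime basics -/

theorem traj_zero (x : Euc n) (α : ℝ → Euc n) : traj x α 0 = x :=
  traj_nonpos x α le_rfl

theorem hit_le {M : Set (Euc n)} {x : Euc n} {α : ℝ → Euc n} {s : ℝ}
    (hs : 0 ≤ s) (hmem : traj x α s ∈ M) : hitTime M x α ≤ ENNReal.ofReal s := by
  refine iInf_le_of_le s (iInf_le_of_le hs (iInf_le _ hmem))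

theorem hit_zero_of_mem {M : Set (Euc n)} {x : Euc n} (α : ℝ → Euc n) (hx : x ∈ M) :
    hitTime M x α = 0 := by
  refine le_antisymm ?_ (zero_le)
  simpa using hit_le le_rfl (by rwa [traj_zero])

theorem hit_ge {M : Set (Euc n)} {x : Euc n} {α : ℝ → Euc n} (hα : Admissible α) :
    ENNReal.ofReal (infDist x M) ≤ hitTime M x α := by
  refine le_iInf fun s => le_iInf fun hs => le_iInf fun hmem => ?_
  refine ENNReal.ofReal_le_ofReal ?_
  calc infDist x M ≤ dist x (traj x α s) := infDist_le_dist_of_mem hmem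
    _ ≤ s := by rw [dist_eq_norm, norm_sub_rev]; exact traj_dist0 hα x hs

theorem not_mem_of_lt_hit {M : Set (Euc n)} {x : Euc n} {α : ℝ → Euc n} {t s : ℝ}
    (ht : ENNReal.ofReal t < hitTime M x α) (hs : 0 ≤ s) (hst : s ≤ t) :
    traj x α s ∉ M := by
  intro hmem
  exact absurd ((hit_le hs hmem).trans (ENNReal.ofReal_le_ofReal hst)) (not_le.2 ht)

/-! ### The cumulative cost `F` -/

def Fc (l : Euc n → ℝ) (x : Euc n) (α : ℝ → Euc n) (t : ℝ) : ℝ :=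
  ∫ s in (0:ℝ)..t, l (traj x α s)

theorem Fc_hasDerivAt {l : Euc n → ℝ} (hl : Continuous l) {α : ℝ → Euc n}
    (hα : Admissible α) (x : Euc n) (t : ℝ) :
    HasDerivAt (Fc l x α) (l (traj x α t)) t := by
  have hc : Continuous fun s => l (traj x α s) := hl.comp (continuous_traj hα x)
  exact intervalIntegral.integral_hasDerivAt_right (hc.intervalIntegrable _ _)
    (hc.stronglyMeasurableAtFilter _ _) hc.continuousAt

theorem Fc_continuous {l : Euc n → ℝ} (hl : Continuous l) {α : ℝ → Euc n}
    (hα : Admissible α) (x : Euc n) : Continuous (Fc l x α) := by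
  have : ∀ t, HasDerivAt (Fc l x α) (l (traj x α t)) t := Fc_hasDerivAt hl hα x
  exact continuous_iff_continuousAt.2 fun t => (this t).continuousAt

theorem Fc_mono {l : Euc n → ℝ} (hl : Continuous l) (hl0 : ∀ z, 0 ≤ l z)
    {α : ℝ → Euc n} (hα : Admissible α) (x : Euc n) {s t : ℝ} (hst : s ≤ t) :
    Fc l x α s ≤ Fc l x α t := by
  have hc : Continuous fun u => l (traj x α u) := hl.comp (continuous_traj hα x)
  have : Fc l x α t - Fc l x α s = ∫ u in s..t, l (traj x α u) := by
    rw [Fc, Fc, ← intervalIntegral.integral_add_adjacent_intervals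
      (hc.intervalIntegrable 0 s) (hc.intervalIntegrable s t)]
    ring
  have h2 : (0:ℝ) ≤ ∫ u in s..t, l (traj x α u) :=
    intervalIntegral.integral_nonneg hst fun u _ => hl0 _
  linarith [this ▸ h2]

theorem Fc_nonneg {l : Euc n → ℝ} (hl0 : ∀ z, 0 ≤ l z) (x : Euc n) (α : ℝ → Euc n)
    {t : ℝ} (ht : 0 ≤ t) : 0 ≤ Fc l x α t :=
  intervalIntegral.integral_nonneg ht fun u _ => hl0 (traj x α u)

theorem ofReal_Fc {l : Euc n → ℝ} (hl : Continuous l) (hl0 : ∀ z, 0 ≤ l z)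
    {α : ℝ → Euc n} (hα : Admissible α) (x : Euc n) {t : ℝ} (ht : 0 ≤ t) :
    ENNReal.ofReal (Fc l x α t)
      = ∫⁻ s in Set.Ioc 0 t, ENNReal.ofReal (l (traj x α s)) := by
  have hc : Continuous fun s => l (traj x α s) := hl.comp (continuous_traj hα x)
  rw [Fc, intervalIntegral.integral_of_le ht]
  exact MeasureTheory.ofReal_integral_eq_lintegral_ofReal
    (hc.integrableOn_Ioc) (Filter.Eventually.of_forall fun s => hl0 _)

theorem cost_ge_Fc {M : Set (Euc n)} {l : Euc n → ℝ} (hl : Continuous l)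
    (hl0 : ∀ z, 0 ≤ l z) {x : Euc n} {α : ℝ → Euc n} (hα : Admissible α) {t : ℝ}
    (ht : 0 ≤ t) (hlt : ENNReal.ofReal t < hitTime M x α) :
    ENNReal.ofReal (Fc l x α t) ≤ cost M l x α := by
  rw [ofReal_Fc hl hl0 hα x ht, cost]
  refine lintegral_mono_set fun s hs => ?_
  exact ⟨hs.1, lt_of_le_of_lt (ENNReal.ofReal_le_ofReal hs.2) hlt⟩


/-! ### Lower bound on the cost of any admissible control -/

theorem rpow_integral_aux {m β : ℝ} (hm : 0 ≤ m) (hβ : 0 < β) :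
    ∫ s in (0:ℝ)..m, (m - s) ^ β = m ^ (β + 1) / (β + 1) := by
  rw [intervalIntegral.integral_comp_sub_left (fun u => u ^ β) m, sub_self, sub_zero]
  rw [integral_rpow (Or.inl (by linarith))]
  rw [Real.zero_rpow (by positivity)]
  ring

theorem cost_lower {M : Set (Euc n)} {l : Euc n → ℝ} (hl : Continuous l)
    (hl0 : ∀ z, 0 ≤ l z) {cl r₁ β : ℝ} (hcl : 0 < cl) (hβ : 0 < β) (hr₁ : 0 < r₁)
    (hA : ∀ (w : Euc n) (q : ℝ), 0 ≤ q → q ≤ r₁ → q ≤ infDist w M → cl * q ^ β ≤ l w)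
    (z : Euc n) {α : ℝ → Euc n} (hα : Admissible α) :
    ENNReal.ofReal (cl / (β + 1) * min (infDist z M) r₁ ^ (β + 1)) ≤ cost M l z α := by
  set m := min (infDist z M) r₁ with hm
  have hmge : 0 ≤ m := le_min infDist_nonneg hr₁.le
  rcases eq_or_lt_of_le hmge with hm0 | hm0
  · rw [← hm0, Real.zero_rpow (by positivity), mul_zero, ENNReal.ofReal_zero]
    exact zero_le
  · -- main case
    have hmd : m ≤ infDist z M := min_le_left _ _
    have hmr : m ≤ r₁ := min_le_right _ _
    -- pointwise bound on Ioo 0 m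
    have hpt : ∀ s ∈ Set.Ioo (0:ℝ) m,
        ENNReal.ofReal (cl * (m - s) ^ β) ≤ ENNReal.ofReal (l (traj z α s)) := by
      intro s hs
      refine ENNReal.ofReal_le_ofReal ?_
      refine hA _ _ (by linarith [hs.2]) (by linarith [hs.1, hmr]) ?_
      have h1 : infDist z M ≤ infDist (traj z α s) M + dist z (traj z α s) :=
        infDist_le_infDist_add_dist
      have h2 : dist z (traj z α s) ≤ s := by
        rw [dist_eq_norm, norm_sub_rev]; exact traj_dist0 hα z hs.1.le
      linarith
    have hsub : Set.Ioo (0:ℝ) m ⊆ {s : ℝ | 0 < s ∧ ENNReal.ofReal s < hitTime M z α} := by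
      intro s hs
      refine ⟨hs.1, lt_of_lt_of_le ?_ ((ENNReal.ofReal_le_ofReal hmd).trans (hit_ge hα))⟩
      exact (ENNReal.ofReal_lt_ofReal_iff hm0).2 hs.2
    have key : ∫⁻ s in Set.Ioo (0:ℝ) m, ENNReal.ofReal (cl * (m - s) ^ β)
        ≤ cost M l z α := by
      refine le_trans ?_ (lintegral_mono_set hsub)
      exact setLIntegral_mono
        (ENNReal.measurable_ofReal.comp (hl.comp (continuous_traj hα z)).measurable) hpt
    refine le_trans (le_of_eq ?_) key
    have hint : IntegrableOn (fun s => cl * (m - s) ^ β) (Set.Ioo 0 m) := by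
      have : IntervalIntegrable (fun s => cl * (m - s) ^ β) volume 0 m := by
        have := (intervalIntegral.intervalIntegrable_rpow' (a := 0) (b := m) (r := β)
          (by linarith)).comp_sub_left m
        simpa [sub_zero, sub_self, Pi.smul_def, smul_eq_mul] using (this.smul cl).symm
      exact ((intervalIntegrable_iff_integrableOn_Ioc_of_le hm0.le).1 this).mono_set
        Set.Ioo_subset_Ioc_self
    have hnn : ∀ s ∈ Set.Ioo (0:ℝ) m, 0 ≤ cl * (m - s) ^ β := by
      intro s hs
      have : (0:ℝ) ≤ (m - s) ^ β := Real.rpow_nonneg (by linarith [hs.2]) β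
      positivity
    rw [← MeasureTheory.ofReal_integral_eq_lintegral_ofReal hint
      ((ae_restrict_iff' measurableSet_Ioo).2 (Filter.Eventually.of_forall hnn))]
    congr 1
    rw [← MeasureTheory.integral_Ioc_eq_integral_Ioo,
      ← intervalIntegral.integral_of_le hm0.le]
    rw [intervalIntegral.integral_const_mul, rpow_integral_aux hm0.le hβ]
    ring


/-! ### Upper bound on the value function -/

theorem valE_le_cost {M : Set (Euc n)} {l : Euc n → ℝ} (z : Euc n) {α : ℝ → Euc n}
    (hα : Admissible α) : valE M l z ≤ cost M l z α :=
  iInf_le_of_le α (iInf_le _ hα)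

theorem zero_admissible : Admissible (fun _ : ℝ => (0 : Euc n)) :=
  ⟨measurable_const, Filter.Eventually.of_forall fun _ _ => by simp⟩

theorem valE_zero_of_mem {M : Set (Euc n)} {l : Euc n → ℝ} {z : Euc n} (hz : z ∈ M) :
    valE M l z = 0 := by
  refine le_antisymm ?_ (zero_le)
  refine le_trans (valE_le_cost z zero_admissible) (le_of_eq ?_)
  have h0 : hitTime M z (fun _ => (0 : Euc n)) = 0 := hit_zero_of_mem _ hz
  have : {s : ℝ | 0 < s ∧ ENNReal.ofReal s < hitTime M z fun _ => (0:Euc n)} = ∅ := by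
    ext s; simp [h0]
  rw [cost, this]
  simp

theorem sqrt_integral_aux {T : ℝ} (hT : 0 ≤ T) :
    ∫ s in (0:ℝ)..T, Real.sqrt (T - s) = 2 / 3 * T ^ ((3:ℝ)/2) := by
  have : ∀ s : ℝ, Real.sqrt (T - s) = (T - s) ^ ((1:ℝ)/2) := fun s => Real.sqrt_eq_rpow _
  simp_rw [this]
  rw [intervalIntegral.integral_comp_sub_left (fun u => u ^ ((1:ℝ)/2)) T, sub_self,
    sub_zero, integral_rpow (Or.inl (by norm_num)), Real.zero_rpow (by norm_num)]
  rw [show (1:ℝ)/2 + 1 = 3/2 by norm_num]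
  ring

theorem valE_le_straight {M : Set (Euc n)} {l : Euc n → ℝ} (hl : Continuous l)
    (hl0 : ∀ z, 0 ≤ l z) {Ksq : ℝ} (hK : 0 ≤ Ksq)
    (hup : ∀ w m', m' ∈ M → l w ≤ Ksq * Real.sqrt (dist w m'))
    {m : Euc n} (hm : m ∈ M) (z : Euc n) :
    valE M l z ≤ ENNReal.ofReal (2 / 3 * Ksq * dist z m ^ ((3:ℝ)/2)) := by
  rcases eq_or_lt_of_le (dist_nonneg (x := z) (y := m)) with hT0 | hT0
  · have : z ∈ M := by rwa [show z = m from dist_eq_zero.1 hT0.symm]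
    rw [valE_zero_of_mem this]
    exact zero_le
  set T := dist z m with hTdef
  set e : Euc n := T⁻¹ • (m - z) with he
  have hnorme : ‖e‖ = 1 := by
    rw [he, norm_smul, norm_inv, Real.norm_eq_abs, abs_of_pos hT0, ← dist_eq_norm']
    field_simp
    exact hTdef.symm
  have hadm : Admissible (fun _ : ℝ => e) :=
    ⟨measurable_const, Filter.Eventually.of_forall fun _ _ => le_of_eq hnorme⟩
  have htraj : ∀ s : ℝ, 0 ≤ s → traj z (fun _ => e) s = z + s • e := by
    intro s hs
    rw [traj, MeasureTheory.setIntegral_const, Real.volume_real_Ioc_of_le hs]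
    norm_num
  have hTe : T • e = m - z := by
    rw [he, smul_smul, mul_inv_cancel₀ hT0.ne', one_smul]
  have hend : traj z (fun _ => e) T = m := by
    rw [htraj T hT0.le, hTe]; abel
  have hhit : hitTime M z (fun _ => e) ≤ ENNReal.ofReal T := hit_le hT0.le (hend ▸ hm)
  refine le_trans (valE_le_cost z hadm) ?_
  have hsub : {s : ℝ | 0 < s ∧ ENNReal.ofReal s < hitTime M z fun _ => e}
      ⊆ Set.Ioo 0 T := by
    intro s hs
    refine ⟨hs.1, ?_⟩
    have := lt_of_lt_of_le hs.2 hhit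
    exact (ENNReal.ofReal_lt_ofReal_iff hT0).1 this
  have hpt : ∀ s ∈ Set.Ioo (0:ℝ) T,
      ENNReal.ofReal (l (traj z (fun _ => e) s)) ≤
        ENNReal.ofReal (Ksq * Real.sqrt (T - s)) := by
    intro s hs
    refine ENNReal.ofReal_le_ofReal ?_
    have hd : dist (traj z (fun _ => e) s) m = T - s := by
      rw [htraj s hs.1.le, dist_eq_norm]
      have : z + s • e - m = (s - T) • e := by
        rw [sub_smul, hTe]; abel
      rw [this, norm_smul, hnorme, Real.norm_eq_abs, mul_one,
        abs_of_nonpos (by linarith [hs.2])]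
      ring
    calc l (traj z (fun _ => e) s) ≤ Ksq * Real.sqrt (dist (traj z (fun _ => e) s) m) :=
          hup _ m hm
      _ = Ksq * Real.sqrt (T - s) := by rw [hd]
  calc cost M l z (fun _ => e)
      ≤ ∫⁻ s in Set.Ioo (0:ℝ) T, ENNReal.ofReal (l (traj z (fun _ => e) s)) :=
        lintegral_mono_set hsub
    _ ≤ ∫⁻ s in Set.Ioo (0:ℝ) T, ENNReal.ofReal (Ksq * Real.sqrt (T - s)) :=
        setLIntegral_mono (by fun_prop) hpt
    _ = ENNReal.ofReal (2 / 3 * Ksq * T ^ ((3:ℝ)/2)) := by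
        have hint : IntegrableOn (fun s => Ksq * Real.sqrt (T - s)) (Set.Ioo 0 T) := by
          have : Continuous fun s : ℝ => Ksq * Real.sqrt (T - s) := by fun_prop
          exact (this.integrableOn_Ioc).mono_set Set.Ioo_subset_Ioc_self
        rw [← MeasureTheory.ofReal_integral_eq_lintegral_ofReal hint
          (Filter.Eventually.of_forall fun s => by positivity)]
        congr 1
        rw [← MeasureTheory.integral_Ioc_eq_integral_Ioo,
          ← intervalIntegral.integral_of_le hT0.le,
          intervalIntegral.integral_const_mul, sqrt_integral_aux hT0.le]
        ring


/-! ### Shifted (tail) controls -/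

theorem ae_shift {P : ℝ → Prop} (h : ∀ᵐ s ∂(volume : Measure ℝ), P s) (t : ℝ) :
    ∀ᵐ s ∂(volume : Measure ℝ), P (t + s) := by
  rw [ae_iff] at h ⊢
  have he : {s : ℝ | ¬ P (t + s)} = (fun s => t + s) ⁻¹' {u | ¬ P u} := rfl
  rw [he, measure_preimage_add]
  exact h

theorem ae_ne_real (t : ℝ) : ∀ᵐ s ∂(volume : Measure ℝ), s ≠ t := by
  rw [ae_iff]
  have he : {s : ℝ | ¬ s ≠ t} = {t} := by ext s; simp
  rw [he]
  exact Real.volume_singleton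

theorem tail_admissible {α : ℝ → Euc n} (hα : Admissible α) {t : ℝ} (ht : 0 ≤ t) :
    Admissible (fun s => α (t + s)) := by
  refine ⟨hα.1.comp (measurable_const_add t), ?_⟩
  filter_upwards [ae_shift hα.2 t] with s hs hs0
  exact hs (by linarith)

theorem traj_tail {α : ℝ → Euc n} (hα : Admissible α) (x : Euc n) {t u : ℝ}
    (ht : 0 ≤ t) (hu : 0 ≤ u) :
    traj (traj x α t) (fun s => α (t + s)) u = traj x α (t + u) := by
  rw [traj_eq_interval _ _ hu, traj_sub hα x ht (by linarith : t ≤ t + u)]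
  congr 1
  rw [intervalIntegral.integral_comp_add_left (fun s => α s) t, add_zero]

theorem hit_tail {M : Set (Euc n)} {x : Euc n} {α : ℝ → Euc n} (hα : Admissible α)
    {t : ℝ} (ht0 : 0 ≤ t) (ht : ENNReal.ofReal t < hitTime M x α) :
    hitTime M (traj x α t) (fun s => α (t + s)) = hitTime M x α - ENNReal.ofReal t := by
  apply le_antisymm
  · refine ENNReal.le_sub_of_add_le_right ENNReal.ofReal_ne_top ?_
    refine le_iInf fun s => le_iInf fun hs => le_iInf fun hmem => ?_
    rcases le_or_gt s t with hst | hst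
    · exact absurd hmem (not_mem_of_lt_hit ht hs hst)
    · have hmem' : traj (traj x α t) (fun s => α (t + s)) (s - t) ∈ M := by
        rw [traj_tail hα x ht0 (by linarith : (0:ℝ) ≤ s - t),
          show t + (s - t) = s by ring]
        exact hmem
      calc hitTime M (traj x α t) (fun s => α (t + s)) + ENNReal.ofReal t
          ≤ ENNReal.ofReal (s - t) + ENNReal.ofReal t :=
            add_le_add_left (hit_le (by linarith) hmem') _
        _ = ENNReal.ofReal s := by
            rw [← ENNReal.ofReal_add (by linarith) ht0]; ring_nf
  · refine le_iInf fun u => le_iInf fun hu => le_iInf fun hmem => ?_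
    rw [tsub_le_iff_right]
    have hmem' : traj x α (t + u) ∈ M := by
      rw [← traj_tail hα x ht0 hu]; exact hmem
    calc hitTime M x α ≤ ENNReal.ofReal (t + u) := hit_le (by linarith) hmem'
      _ = ENNReal.ofReal u + ENNReal.ofReal t := by
          rw [ENNReal.ofReal_add ht0 hu, add_comm]

theorem cost_shift {M : Set (Euc n)} {l : Euc n → ℝ} (hl : Continuous l)
    (hl0 : ∀ z, 0 ≤ l z) {x : Euc n} {α : ℝ → Euc n} (hα : Admissible α) {t : ℝ}
    (ht0 : 0 ≤ t) (ht : ENNReal.ofReal t < hitTime M x α) :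
    cost M l x α = ENNReal.ofReal (Fc l x α t)
      + cost M l (traj x α t) (fun s => α (t + s)) := by
  set H := hitTime M x α with hH
  have hsplit : {s : ℝ | 0 < s ∧ ENNReal.ofReal s < H}
      = Set.Ioc 0 t ∪ {s : ℝ | t < s ∧ ENNReal.ofReal s < H} := by
    ext s
    simp only [Set.mem_setOf_eq, Set.mem_union, Set.mem_Ioc]
    constructor
    · rintro ⟨h1, h2⟩
      rcases le_or_gt s t with h | h
      · exact Or.inl ⟨h1, h⟩
      · exact Or.inr ⟨h, h2⟩
    · rintro (⟨h1, h2⟩ | ⟨h1, h2⟩)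
      · exact ⟨h1, lt_of_le_of_lt (ENNReal.ofReal_le_ofReal h2) ht⟩
      · exact ⟨lt_of_le_of_lt ht0 h1, h2⟩
  have hmeasB : MeasurableSet {s : ℝ | t < s ∧ ENNReal.ofReal s < H} := by
    have he : {s : ℝ | t < s ∧ ENNReal.ofReal s < H}
        = Set.Ioi t ∩ (fun s : ℝ => ENNReal.ofReal s) ⁻¹' (Set.Iio H) := rfl
    rw [he]
    exact measurableSet_Ioi.inter (ENNReal.measurable_ofReal measurableSet_Iio)
  have hdisj : Disjoint (Set.Ioc (0:ℝ) t) {s : ℝ | t < s ∧ ENNReal.ofReal s < H} :=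
    Set.disjoint_left.2 fun s hs hs' => absurd hs'.1 (not_lt.2 hs.2)
  rw [cost, hsplit, lintegral_union hmeasB hdisj]
  congr 1
  · exact (ofReal_Fc hl hl0 hα x ht0).symm
  · have hemb := (Homeomorph.addLeft t).measurableEmbedding
    have hmp := measurePreserving_add_left (volume : Measure ℝ) t
    have hch := hmp.setLIntegral_comp_preimage_emb hemb
      (fun s => ENNReal.ofReal (l (traj x α s))) {s : ℝ | t < s ∧ ENNReal.ofReal s < H}
    have hpre : (⇑(Homeomorph.addLeft t)) ⁻¹' {s : ℝ | t < s ∧ ENNReal.ofReal s < H}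
        = {u : ℝ | 0 < u ∧ ENNReal.ofReal u
            < hitTime M (traj x α t) (fun s => α (t + s))} := by
      rw [hit_tail hα ht0 ht]
      ext u
      simp only [Set.mem_preimage, Set.mem_setOf_eq, Homeomorph.coe_addLeft]
      constructor
      · rintro ⟨h1, h2⟩
        refine ⟨by linarith, ?_⟩
        rw [lt_tsub_iff_left]
        rwa [← ENNReal.ofReal_add ht0 (by linarith : (0:ℝ) ≤ u)]
      · rintro ⟨h1, h2⟩
        refine ⟨by linarith, ?_⟩
        rw [lt_tsub_iff_left] at h2
        rwa [ENNReal.ofReal_add ht0 h1.le]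
    rw [← hch, cost, ← hpre]
    refine setLIntegral_congr_fun (hmeasB.preimage (Homeomorph.addLeft t).measurable) ?_
    intro u hu
    dsimp only
    have htu : t < t + u := hu.1
    have hu0 : (0:ℝ) ≤ u := by linarith
    rw [traj_tail hα x ht0 hu0]

/-! ### Concatenated controls -/

theorem valE_le_concat {M : Set (Euc n)} {l : Euc n → ℝ} (hl : Continuous l)
    (hl0 : ∀ z, 0 ≤ l z) {x : Euc n} {α : ℝ → Euc n} (hα : Admissible α) {t : ℝ}
    (ht0 : 0 ≤ t) (ht : ENNReal.ofReal t < hitTime M x α) {β : ℝ → Euc n}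
    (hβ : Admissible β) :
    valE M l x ≤ ENNReal.ofReal (Fc l x α t) + cost M l (traj x α t) β := by
  classical
  set αc : ℝ → Euc n := fun s => if s < t then α s else β (s - t) with hαc
  have hadm : Admissible αc := by
    refine ⟨Measurable.ite measurableSet_Iio hα.1 (hβ.1.comp (measurable_sub_const t)), ?_⟩
    filter_upwards [hα.2, ae_shift hβ.2 (-t)] with s h1 h2 hs0
    by_cases hst : s < t
    · simpa [hαc, hst] using h1 hs0
    · have he : -t + s = s - t := by ring
      rw [he] at h2
      simp only [hαc, hst, if_false]
      exact h2 (by linarith)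
  have htrajeq : ∀ u : ℝ, u ≤ t → traj x αc u = traj x α u := by
    intro u hut
    rw [traj, traj]
    congr 1
    refine setIntegral_congr_ae measurableSet_Ioc ?_
    filter_upwards [ae_ne_real t] with s hs hmem
    have hst : s < t := lt_of_le_of_ne (hmem.2.trans hut) hs
    simp [hαc, hst]
  have htraj2 : ∀ u : ℝ, 0 ≤ u → traj x αc (t + u) = traj (traj x α t) β u := by
    intro u hu
    rw [traj_sub hadm x ht0 (by linarith : t ≤ t + u), htrajeq t le_rfl,
      traj_eq_interval _ _ hu]
    congr 1
    have hchv : ∫ s in (0:ℝ)..u, αc (t + s) = ∫ s in t..(t+u), αc s := by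
      rw [intervalIntegral.integral_comp_add_left αc t, add_zero]
    rw [← hchv]
    refine intervalIntegral.integral_congr fun s hs => ?_
    have hs0 : 0 ≤ s := by
      rcases Set.mem_uIcc.1 hs with h | h
      · exact h.1
      · linarith [h.1, h.2, hu]
    simp only [hαc]
    rw [if_neg (by linarith), add_sub_cancel_left]
  have hhitc : hitTime M x αc - ENNReal.ofReal t ≤ hitTime M (traj x α t) β := by
    refine le_iInf fun u => le_iInf fun hu => le_iInf fun hmem => ?_
    rw [tsub_le_iff_left]
    have hmem' : traj x αc (t + u) ∈ M := by rw [htraj2 u hu]; exact hmem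
    calc hitTime M x αc ≤ ENNReal.ofReal (t + u) := hit_le (by linarith) hmem'
      _ = ENNReal.ofReal t + ENNReal.ofReal u := ENNReal.ofReal_add ht0 hu
  refine le_trans (valE_le_cost x hadm) ?_
  set Hc := hitTime M x αc with hHc
  have hsub : {s : ℝ | 0 < s ∧ ENNReal.ofReal s < Hc}
      ⊆ Set.Ioc 0 t ∪ {s : ℝ | t < s ∧ ENNReal.ofReal s < Hc} := by
    intro s hs
    rcases le_or_gt s t with h | h
    · exact Or.inl ⟨hs.1, h⟩
    · exact Or.inr ⟨h, hs.2⟩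
  refine le_trans (lintegral_mono_set hsub) (le_trans (lintegral_union_le _ _ _) ?_)
  refine add_le_add (le_of_eq ?_) ?_
  · -- first piece equals ofReal (Fc t)
    rw [ofReal_Fc hl hl0 hα x ht0]
    refine setLIntegral_congr_fun measurableSet_Ioc ?_
    intro s hs
    dsimp only
    rw [htrajeq s hs.2]
  · -- second piece
    have hemb := (Homeomorph.addLeft t).measurableEmbedding
    have hmp := measurePreserving_add_left (volume : Measure ℝ) t
    have hmeasB : MeasurableSet {s : ℝ | t < s ∧ ENNReal.ofReal s < Hc} := by
      have he : {s : ℝ | t < s ∧ ENNReal.ofReal s < Hc}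
          = Set.Ioi t ∩ (fun s : ℝ => ENNReal.ofReal s) ⁻¹' (Set.Iio Hc) := rfl
      rw [he]
      exact measurableSet_Ioi.inter (ENNReal.measurable_ofReal measurableSet_Iio)
    have hch := hmp.setLIntegral_comp_preimage_emb hemb
      (fun s => ENNReal.ofReal (l (traj x αc s))) {s : ℝ | t < s ∧ ENNReal.ofReal s < Hc}
    rw [← hch]
    have hsub2 : (⇑(Homeomorph.addLeft t)) ⁻¹' {s : ℝ | t < s ∧ ENNReal.ofReal s < Hc}
        ⊆ {u : ℝ | 0 < u ∧ ENNReal.ofReal u < hitTime M (traj x α t) β} := by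
      intro u hu
      simp only [Set.mem_preimage, Set.mem_setOf_eq, Homeomorph.coe_addLeft] at hu
      refine ⟨by linarith [hu.1], ?_⟩
      refine lt_of_lt_of_le ?_ hhitc
      rw [lt_tsub_iff_left, ← ENNReal.ofReal_add ht0 (by linarith [hu.1] : (0:ℝ) ≤ u)]
      exact hu.2
    calc ∫⁻ u in (⇑(Homeomorph.addLeft t)) ⁻¹' {s : ℝ | t < s ∧ ENNReal.ofReal s < Hc},
          ENNReal.ofReal (l (traj x αc (Homeomorph.addLeft t u)))
        = ∫⁻ u in (⇑(Homeomorph.addLeft t)) ⁻¹' {s : ℝ | t < s ∧ ENNReal.ofReal s < Hc},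
          ENNReal.ofReal (l (traj (traj x α t) β u)) := by
          refine setLIntegral_congr_fun (hmeasB.preimage (Homeomorph.addLeft t).measurable)
            (fun u hu => ?_)
          simp only [Set.mem_preimage, Set.mem_setOf_eq, Homeomorph.coe_addLeft] at hu
          simp only [Homeomorph.coe_addLeft]
          rw [htraj2 u (by linarith [hu.1])]
      _ ≤ cost M l (traj x α t) β := lintegral_mono_set hsub2


/-! ### ODE comparison -/

theorem ode_core {g dg : ℝ → ℝ} {t₀ T A θ : ℝ} (hA : 0 < A) (hθ0 : 0 ≤ θ) (hθ1 : θ < 1)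
    (ht : t₀ ≤ T)
    (hg : ∀ t ∈ Set.Icc t₀ T, HasDerivAt g (dg t) t)
    (hpos : ∀ t ∈ Set.Icc t₀ T, 0 < g t)
    (hder : ∀ t ∈ Set.Icc t₀ T, dg t ≤ -A * g t ^ θ) :
    T - t₀ < g t₀ ^ (1 - θ) / (A * (1 - θ)) := by
  have h1θ : 0 < 1 - θ := by linarith
  have hg₀ : 0 < g t₀ := hpos t₀ ⟨le_rfl, ht⟩
  have hnum : 0 < g t₀ ^ (1 - θ) := Real.rpow_pos_of_pos hg₀ _
  rcases eq_or_lt_of_le ht with heq | hlt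
  · rw [← heq, sub_self]
    positivity
  · set h := fun t => g t ^ (1 - θ) with hh
    have hd : ∀ t ∈ Set.Icc t₀ T,
        HasDerivAt h (dg t * (1 - θ) * g t ^ (1 - θ - 1)) t := by
      intro t htm
      exact (hg t htm).rpow_const (Or.inl (hpos t htm).ne')
    obtain ⟨cpt, hcpt, hslope⟩ := exists_deriv_eq_slope h hlt
      (fun t htm => (hd t htm).continuousAt.continuousWithinAt)
      (fun t htm => ((hd t ⟨htm.1.le, htm.2.le⟩).differentiableAt).differentiableWithinAt)
    have hcpt' : cpt ∈ Set.Icc t₀ T := ⟨hcpt.1.le, hcpt.2.le⟩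
    have hgc : 0 < g cpt := hpos cpt hcpt'
    have hgcθ : (0:ℝ) < g cpt ^ θ := Real.rpow_pos_of_pos hgc _
    have hderiv : deriv h cpt = dg cpt * (1 - θ) * g cpt ^ (1 - θ - 1) :=
      (hd cpt hcpt').deriv
    have hbound : deriv h cpt ≤ -(A * (1 - θ)) := by
      rw [hderiv]
      have hpow : g cpt ^ (1 - θ - 1) = (g cpt ^ θ)⁻¹ := by
        rw [show (1 - θ - 1 : ℝ) = -θ by ring, Real.rpow_neg hgc.le]
      rw [hpow]
      have hmul : dg cpt * (1 - θ) ≤ -A * g cpt ^ θ * (1 - θ) := by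
        nlinarith [hder cpt hcpt']
      calc dg cpt * (1 - θ) * (g cpt ^ θ)⁻¹
          ≤ (-A * g cpt ^ θ * (1 - θ)) * (g cpt ^ θ)⁻¹ :=
            mul_le_mul_of_nonneg_right hmul (by positivity)
        _ = -(A * (1 - θ)) := by field_simp
    have hTt : 0 < T - t₀ := by linarith
    have hslope' : (h T - h t₀) / (T - t₀) ≤ -(A * (1 - θ)) := hslope ▸ hbound
    have hhT : 0 < h T := Real.rpow_pos_of_pos (hpos T ⟨ht, le_rfl⟩) _
    have hineq : h T - h t₀ ≤ -(A * (1 - θ)) * (T - t₀) := (div_le_iff₀ hTt).1 hslope'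
    rw [lt_div_iff₀ (by positivity)]
    have : h t₀ = g t₀ ^ (1 - θ) := rfl
    nlinarith

/-! ### Escape-time estimate -/

theorem escape {M : Set (Euc n)} (hMc : IsClosed M) (hMne : M.Nonempty)
    {l : Euc n → ℝ} (hl : Continuous l) (hl0 : ∀ z, 0 ≤ l z)
    {cl r₁ β K : ℝ} (hcl : 0 < cl) (hβ0 : 0 < β) (hβ32 : β < 3/2)
    (hr₁0 : 0 < r₁) (hK : 1 ≤ K)
    (hA : ∀ (w : Euc n) (q : ℝ), 0 ≤ q → q ≤ r₁ → q ≤ infDist w M → cl * q ^ β ≤ l w)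
    (hvup : ∀ z : Euc n, valE M l z ≤ ENNReal.ofReal (K * infDist z M ^ ((3:ℝ)/2)))
    {x : Euc n} {α : ℝ → Euc n} (hopt : IsOptimal M l x α)
    {t₀ T : ℝ} (ht₀ : 0 ≤ t₀) (htT : t₀ ≤ T)
    (hTH : ENNReal.ofReal T < hitTime M x α)
    (hsmall : (valE M l x).toReal - Fc l x α t₀ ≤ K * r₁ ^ ((3:ℝ)/2)) :
    T - t₀ < ((valE M l x).toReal - Fc l x α t₀) ^ (1 - 2*β/3)
      / ((cl / K ^ (2*β/3)) * (1 - 2*β/3)) := by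
  obtain ⟨hadm, hcost⟩ := hopt
  have hθ0 : (0:ℝ) < 2*β/3 := by linarith
  have hθ1 : 2*β/3 < 1 := by linarith
  have hK0 : (0:ℝ) < K := lt_of_lt_of_le one_pos hK
  set V := valE M l x with hV
  have hVne : V ≠ ⊤ := ne_top_of_le_ne_top ENNReal.ofReal_ne_top (hvup x)
  set g := fun t => V.toReal - Fc l x α t with hgdef
  have hgup : ∀ t, 0 ≤ t → ENNReal.ofReal t < hitTime M x α →
      g t ≤ K * infDist (traj x α t) M ^ ((3:ℝ)/2) := by
    intro t ht0' htH
    have h1 : V - ENNReal.ofReal (Fc l x α t) ≤ valE M l (traj x α t) := by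
      refine le_iInf fun βc => le_iInf fun hβc => ?_
      rw [tsub_le_iff_left]
      exact valE_le_concat hl hl0 hadm ht0' htH hβc
    have h2 := h1.trans (hvup (traj x α t))
    have h3 : ENNReal.ofReal (Fc l x α t) ≤ V :=
      le_of_le_of_eq (cost_ge_Fc hl hl0 hadm ht0' htH) hcost
    have h4 := ENNReal.toReal_mono ENNReal.ofReal_ne_top h2
    rw [ENNReal.toReal_sub_of_le h3 hVne,
      ENNReal.toReal_ofReal (Fc_nonneg hl0 x α ht0'),
      ENNReal.toReal_ofReal (mul_nonneg hK0.le (Real.rpow_nonneg infDist_nonneg _))] at h4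
    exact h4
  have hgpos : ∀ t, 0 ≤ t → ENNReal.ofReal t < hitTime M x α → 0 < g t := by
    intro t ht0' htH
    have hshift := cost_shift hl hl0 hadm ht0' htH
    rw [hcost] at hshift
    have hlow' := cost_lower hl hl0 hcl hβ0 hr₁0 hA (traj x α t)
      (tail_admissible hadm ht0')
    have hne : traj x α t ∉ M := not_mem_of_lt_hit htH ht0' le_rfl
    have hdpos : 0 < infDist (traj x α t) M := (hMc.notMem_iff_infDist_pos hMne).1 hne
    have hmin : 0 < min (infDist (traj x α t) M) r₁ := lt_min hdpos hr₁0
    have hc3 : 0 < cl/(β+1) * min (infDist (traj x α t) M) r₁ ^ (β+1) := by positivity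
    have h5 : ENNReal.ofReal (Fc l x α t)
        + ENNReal.ofReal (cl/(β+1) * min (infDist (traj x α t) M) r₁ ^ (β+1)) ≤ V :=
      le_of_le_of_eq (add_le_add_right hlow' _) hshift.symm
    rw [← ENNReal.ofReal_add (Fc_nonneg hl0 x α ht0') hc3.le] at h5
    have h6 := ENNReal.toReal_mono hVne h5
    rw [ENNReal.toReal_ofReal (add_nonneg (Fc_nonneg hl0 x α ht0') hc3.le)] at h6
    simp only [hgdef]
    linarith
  refine ode_core (A := cl / K ^ (2*β/3)) (θ := 2*β/3) (by positivity) hθ0.le hθ1 htT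
    (fun t htm => (Fc_hasDerivAt hl hadm x t).const_sub _) ?_ ?_
  · intro t htm
    exact hgpos t (ht₀.trans htm.1)
      (lt_of_le_of_lt (ENNReal.ofReal_le_ofReal htm.2) hTH)
  · intro t htm
    have ht0' : 0 ≤ t := ht₀.trans htm.1
    have htH : ENNReal.ofReal t < hitTime M x α :=
      lt_of_le_of_lt (ENNReal.ofReal_le_ofReal htm.2) hTH
    have h2 := hgup t ht0' htH
    have hgt0 : 0 < g t := hgpos t ht0' htH
    set dd := infDist (traj x α t) M with hdd
    set q := (g t / K) ^ ((2:ℝ)/3) with hq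
    have hq0 : (0:ℝ) ≤ q := Real.rpow_nonneg (by positivity) _
    have hgmono : g t ≤ g t₀ := by
      have := Fc_mono hl hl0 hadm x htm.1
      simp only [hgdef]
      linarith
    have hq1 : q ≤ r₁ := by
      have hh : g t / K ≤ r₁ ^ ((3:ℝ)/2) := by
        rw [div_le_iff₀ hK0]
        calc g t ≤ g t₀ := hgmono
          _ ≤ K * r₁ ^ ((3:ℝ)/2) := hsmall
          _ = r₁ ^ ((3:ℝ)/2) * K := mul_comm _ _
      calc q ≤ (r₁ ^ ((3:ℝ)/2)) ^ ((2:ℝ)/3) :=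
            Real.rpow_le_rpow (by positivity) hh (by norm_num)
        _ = r₁ := by
            rw [← Real.rpow_mul hr₁0.le]
            norm_num
    have hq2 : q ≤ dd := by
      have hh : g t / K ≤ dd ^ ((3:ℝ)/2) := by
        rw [div_le_iff₀ hK0]
        calc g t ≤ K * dd ^ ((3:ℝ)/2) := h2
          _ = dd ^ ((3:ℝ)/2) * K := mul_comm _ _
      calc q ≤ (dd ^ ((3:ℝ)/2)) ^ ((2:ℝ)/3) :=
            Real.rpow_le_rpow (by positivity) hh (by norm_num)
        _ = dd := by
            rw [← Real.rpow_mul infDist_nonneg]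
            norm_num
            exact hdd.symm
    have hlb := hA (traj x α t) q hq0 hq1 hq2
    have hqβ : q ^ β = (g t / K) ^ (2*β/3) := by
      rw [hq, ← Real.rpow_mul (by positivity : (0:ℝ) ≤ g t / K)]
      congr 1
      ring
    have heq2 : cl * q ^ β = cl / K ^ (2*β/3) * g t ^ (2*β/3) := by
      rw [hqβ, Real.div_rpow hgt0.le hK0.le]
      field_simp
    have : cl / K ^ (2*β/3) * g t ^ (2*β/3) ≤ l (traj x α t) := by
      rw [← heq2]; exact hlb
    linarith


/-! ### Upper bound for the value function via nearest points -/

theorem valE_upper {M : Set (Euc n)} (hMne : M.Nonempty) {l : Euc n → ℝ}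
    (hl : Continuous l) (hl0 : ∀ z, 0 ≤ l z) {Ksq : ℝ} (hKsq : 0 ≤ Ksq)
    (hup : ∀ w m', m' ∈ M → l w ≤ Ksq * Real.sqrt (dist w m')) {K : ℝ}
    (hK : 2/3 * Ksq ≤ K) (hK0 : 0 ≤ K) (z : Euc n) :
    valE M l z ≤ ENNReal.ofReal (K * infDist z M ^ ((3:ℝ)/2)) := by
  set d := infDist z M with hd
  have hd0 : 0 ≤ d := infDist_nonneg
  have hstep : ∀ ε : ℝ, 0 < ε →
      valE M l z ≤ ENNReal.ofReal (K * (d + ε) ^ ((3:ℝ)/2)) := by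
    intro ε hε
    obtain ⟨m, hmM, hmd⟩ := (infDist_lt_iff hMne).1 (show d < d + ε by linarith)
    refine le_trans (valE_le_straight hl hl0 hKsq hup hmM z)
      (ENNReal.ofReal_le_ofReal ?_)
    have h1 : dist z m ^ ((3:ℝ)/2) ≤ (d + ε) ^ ((3:ℝ)/2) :=
      Real.rpow_le_rpow dist_nonneg hmd.le (by norm_num)
    exact mul_le_mul hK h1 (Real.rpow_nonneg dist_nonneg _) hK0
  have h1 : Tendsto (fun ε : ℝ => d + ε) (𝓝[>] 0) (𝓝 d) :=
    tendsto_nhdsWithin_of_tendsto_nhds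
      (Continuous.tendsto' (by fun_prop) 0 d (by simp))
  have h2 : ContinuousAt (fun u : ℝ => ENNReal.ofReal (K * u ^ ((3:ℝ)/2))) d :=
    ENNReal.continuous_ofReal.continuousAt.comp
      (continuousAt_const.mul (Real.continuousAt_rpow_const d _ (Or.inr (by norm_num))))
  exact ge_of_tendsto (h2.tendsto.comp h1)
    (eventually_nhdsWithin_of_forall fun ε hε => hstep ε hε)

/-! ### Finiteness of the hitting time -/

theorem cost_sup_Fc {M : Set (Euc n)} {l : Euc n → ℝ} (hl : Continuous l)
    (hl0 : ∀ z, 0 ≤ l z) {x : Euc n} {α : ℝ → Euc n} (hα : Admissible α)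
    (htop : hitTime M x α = ⊤) :
    cost M l x α = ⨆ k : ℕ, ENNReal.ofReal (Fc l x α k) := by
  have hdom : {s : ℝ | 0 < s ∧ ENNReal.ofReal s < hitTime M x α} = Set.Ioi 0 := by
    ext s
    simp [htop, ENNReal.ofReal_lt_top]
  rw [cost, hdom]
  set h : ℝ → ℝ≥0∞ := fun s => ENNReal.ofReal (l (traj x α s)) with hh
  have hmeas : Measurable h :=
    ENNReal.measurable_ofReal.comp (hl.comp (continuous_traj hα x)).measurable
  have hptw : ∀ s : ℝ, (⨆ k : ℕ, (Set.Ioc (0:ℝ) (k:ℝ)).indicator h s)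
      = (Set.Ioi (0:ℝ)).indicator h s := by
    intro s
    rcases le_or_gt s 0 with hs | hs
    · rw [Set.indicator_of_notMem (by simpa using hs)]
      simp only [ENNReal.iSup_eq_zero]
      intro k
      exact Set.indicator_of_notMem (fun hc => absurd hc.1 (not_lt.2 hs)) _
    · rw [Set.indicator_of_mem (Set.mem_Ioi.2 hs) h]
      refine le_antisymm (iSup_le fun k => ?_) ?_
      · exact Set.indicator_le_self _ _ _
      · refine le_trans (le_of_eq ?_) (le_iSup _ (Nat.ceil s))
        rw [Set.indicator_of_mem (Set.mem_Ioc.2 ⟨hs, Nat.le_ceil s⟩) h]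
  calc ∫⁻ s in Set.Ioi (0:ℝ), h s
      = ∫⁻ s, (Set.Ioi (0:ℝ)).indicator h s := (lintegral_indicator measurableSet_Ioi h).symm
    _ = ∫⁻ s, ⨆ k : ℕ, (Set.Ioc (0:ℝ) (k:ℝ)).indicator h s := by
        refine lintegral_congr fun s => (hptw s).symm
    _ = ⨆ k : ℕ, ∫⁻ s, (Set.Ioc (0:ℝ) (k:ℝ)).indicator h s := by
        refine lintegral_iSup (fun k => hmeas.indicator measurableSet_Ioc) ?_
        intro k k' hkk'
        exact Set.indicator_le_indicator_of_subset
          (Set.Ioc_subset_Ioc_right (by exact_mod_cast hkk')) (fun s => zero_le)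
    _ = ⨆ k : ℕ, ENNReal.ofReal (Fc l x α k) := by
        refine iSup_congr fun k => ?_
        rw [lintegral_indicator measurableSet_Ioc, ofReal_Fc hl hl0 hα x (Nat.cast_nonneg k)]

theorem hit_finite {M : Set (Euc n)} (hMc : IsClosed M) (hMne : M.Nonempty)
    {l : Euc n → ℝ} (hl : Continuous l) (hl0 : ∀ z, 0 ≤ l z)
    {cl r₁ β K : ℝ} (hcl : 0 < cl) (hβ0 : 0 < β) (hβ32 : β < 3/2)
    (hr₁0 : 0 < r₁) (hK : 1 ≤ K)
    (hA : ∀ (w : Euc n) (q : ℝ), 0 ≤ q → q ≤ r₁ → q ≤ infDist w M → cl * q ^ β ≤ l w)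
    (hvup : ∀ z : Euc n, valE M l z ≤ ENNReal.ofReal (K * infDist z M ^ ((3:ℝ)/2)))
    {x : Euc n} {α : ℝ → Euc n} (hopt : IsOptimal M l x α) :
    hitTime M x α ≠ ⊤ := by
  intro htop
  have hK0 : (0:ℝ) < K := lt_of_lt_of_le one_pos hK
  have hVne : valE M l x ≠ ⊤ := ne_top_of_le_ne_top ENNReal.ofReal_ne_top (hvup x)
  set V := valE M l x with hV
  have hδ : (0:ℝ) < K * r₁ ^ ((3:ℝ)/2) := by
    have := Real.rpow_pos_of_pos hr₁0 ((3:ℝ)/2)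
    positivity
  have hex : ∃ k : ℕ, V.toReal - Fc l x α k ≤ K * r₁ ^ ((3:ℝ)/2) := by
    by_contra hcon
    push_neg at hcon
    have hub : ∀ k : ℕ, ENNReal.ofReal (Fc l x α k)
        ≤ ENNReal.ofReal (V.toReal - K * r₁ ^ ((3:ℝ)/2)) :=
      fun k => ENNReal.ofReal_le_ofReal (by linarith [hcon k])
    have hc : V = ⨆ k : ℕ, ENNReal.ofReal (Fc l x α k) := by
      rw [hV, ← hopt.2]
      exact cost_sup_Fc hl hl0 hopt.1 htop
    have hle : V ≤ ENNReal.ofReal (V.toReal - K * r₁ ^ ((3:ℝ)/2)) :=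
      calc V = ⨆ k : ℕ, ENNReal.ofReal (Fc l x α k) := hc
        _ ≤ ENNReal.ofReal (V.toReal - K * r₁ ^ ((3:ℝ)/2)) := iSup_le hub
    have hV0 : (0:ℝ) < V.toReal := by
      have h0 := hcon 0
      rw [show ((0:ℕ):ℝ) = (0:ℝ) by norm_num, Fc, intervalIntegral.integral_same] at h0
      linarith
    have hlt : ENNReal.ofReal (V.toReal - K * r₁ ^ ((3:ℝ)/2)) < V := by
      calc ENNReal.ofReal (V.toReal - K * r₁ ^ ((3:ℝ)/2)) < ENNReal.ofReal (V.toReal) := by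
            rw [ENNReal.ofReal_lt_ofReal_iff hV0]
            linarith
        _ = V := ENNReal.ofReal_toReal hVne
    exact absurd hle (not_le.2 hlt)
  obtain ⟨k, hk⟩ := hex
  set B := (V.toReal - Fc l x α k) ^ (1 - 2*β/3) / ((cl / K ^ (2*β/3)) * (1 - 2*β/3))
    with hB
  have := escape hMc hMne hl hl0 hcl hβ0 hβ32 hr₁0 hK hA hvup hopt
    (Nat.cast_nonneg k) (le_add_of_nonneg_right (by positivity : (0:ℝ) ≤ |B| + 1) :
      (k:ℝ) ≤ (k:ℝ) + (|B| + 1)) (by rw [htop]; exact ENNReal.ofReal_lt_top) hk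
  rw [← hB] at this
  have habs : (k:ℝ) + (|B| + 1) - k = |B| + 1 := by ring
  rw [habs] at this
  linarith [le_abs_self B]

end S19

theorem stmt19_aux {n : ℕ} (f : Euc n → ℝ) (flo fhi C1 C2 : ℝ)
    (hcont : Continuous f) (hlo : ∀ x, flo ≤ f x) (hhi : ∀ x, f x ≤ fhi)
    (hattain : ∃ x, f x = flo)
    (hlip : ∀ x y : Euc n, |f x - f y| ≤ C1 * dist x y)
    (hsc : ∀ x h : Euc n, f (x + h) + f (x - h) - 2 * f x ≤ C2 * ‖h‖ ^ 2)
    (γ : ℝ → ℝ)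
    (hH : ∀ δ : ℝ, 0 < δ → 0 < γ δ ∧
      γ δ < sInf (lOf f flo '' {y : Euc n | δ < Metric.infDist y (MOf f flo)}))
    (c r β : ℝ) (hc : 0 < c) (hr : 0 < r) (hβ0 : 0 < β) (hβ : β < 3 / 2)
    (hlow : ∀ x : Euc n, Metric.infDist x (MOf f flo) ≤ r →
      c * Metric.infDist x (MOf f flo) ^ β ≤ lOf f flo x) :
    (∀ x : Euc n, ∀ α : ℝ → Euc n, IsOptimal (MOf f flo) (lOf f flo) x α →
      hitTime (MOf f flo) x α ≠ ⊤) ∧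
    ∃ C : ℝ, 0 < C ∧ ∃ r₀ : ℝ, 0 < r₀ ∧
      ∀ x : Euc n, Metric.infDist x (MOf f flo) ≤ r₀ →
        ∀ α : ℝ → Euc n, IsOptimal (MOf f flo) (lOf f flo) x α →
          hitTime (MOf f flo) x α ≤
            ENNReal.ofReal ((C / (1 - 2 * β / 3)) *
              Metric.infDist x (MOf f flo) ^ ((3 : ℝ) / 2 - β)) := by
  classical
  set M := MOf f flo with hM
  set l := lOf f flo with hldef
  have hMne : M.Nonempty := hattain
  have hMc : IsClosed M := isClosed_eq hcont continuous_const
  have hl0 : ∀ z, 0 ≤ l z := fun z => Real.sqrt_nonneg _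
  have hlcont : Continuous l :=
    Real.continuous_sqrt.comp (continuous_const.mul (hcont.sub continuous_const))
  by_cases hMuniv : ∀ z : Euc n, z ∈ M
  · refine ⟨fun x α _ => ?_, 1, one_pos, 1, one_pos, fun x _ α _ => ?_⟩
    · rw [S19.hit_zero_of_mem α (hMuniv x)]
      exact ENNReal.zero_ne_top
    · rw [S19.hit_zero_of_mem α (hMuniv x)]
      exact zero_le
  · push_neg at hMuniv
    obtain ⟨z₀, hz₀⟩ := hMuniv
    obtain ⟨m₀, hm₀⟩ := hattain
    have hfz₀ : flo < f z₀ := lt_of_le_of_ne (hlo z₀) (Ne.symm hz₀)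
    have hC1 : 0 < C1 := by
      have h1 := hlip z₀ m₀
      have h2 : 0 < |f z₀ - f m₀| := by
        rw [hm₀, abs_pos]
        exact sub_ne_zero.2 (ne_of_gt hfz₀)
      nlinarith [dist_nonneg (x := z₀) (y := m₀)]
    set Ksq := Real.sqrt (2*C1) with hKsqdef
    have hKsq0 : 0 ≤ Ksq := Real.sqrt_nonneg _
    have hup : ∀ w m', m' ∈ M → l w ≤ Ksq * Real.sqrt (dist w m') := by
      intro w m' hm'
      have hfm' : f m' = flo := hm'
      have h1 : f w - flo ≤ C1 * dist w m' := by
        have h2 := hlip w m'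
        have h3 : f w - f m' ≤ C1 * dist w m' := le_trans (le_abs_self _) h2
        rwa [hfm'] at h3
      calc l w = Real.sqrt (2 * (f w - flo)) := rfl
        _ ≤ Real.sqrt (2 * C1 * dist w m') := Real.sqrt_le_sqrt (by linarith)
        _ = Ksq * Real.sqrt (dist w m') := by
            rw [hKsqdef, ← Real.sqrt_mul (by positivity)]
    set K := max 1 (2/3 * Ksq) with hKdef
    have hK1 : 1 ≤ K := le_max_left _ _
    have hK0 : (0:ℝ) < K := lt_of_lt_of_le one_pos hK1
    have hvup : ∀ z, valE M l z ≤ ENNReal.ofReal (K * infDist z M ^ ((3:ℝ)/2)) :=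
      fun z => S19.valE_upper hMne hlcont hl0 hKsq0 hup (le_max_right _ _) hK0.le z
    set r₁ := min r 1 / 2 with hr₁def
    have hr₁0 : 0 < r₁ := by
      have : (0:ℝ) < min r 1 := lt_min hr one_pos
      positivity
    have hr₁le : r₁ ≤ 1 := by
      have : min r 1 ≤ 1 := min_le_right _ _
      rw [hr₁def]
      linarith
    obtain ⟨hγ0, hγlt⟩ := hH r₁ hr₁0
    set cl := min c (γ r₁) with hcldef
    have hcl : 0 < cl := lt_min hc hγ0
    have hAhyp : ∀ (w : Euc n) (q : ℝ), 0 ≤ q → q ≤ r₁ → q ≤ infDist w M →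
        cl * q ^ β ≤ l w := by
      intro w q hq0 hqr hqd
      rcases le_or_gt (infDist w M) r with hwr | hwr
      · have h1 := hlow w hwr
        have h2 : q ^ β ≤ infDist w M ^ β := Real.rpow_le_rpow hq0 hqd hβ0.le
        calc cl * q ^ β ≤ c * infDist w M ^ β :=
              mul_le_mul (min_le_left _ _) h2 (Real.rpow_nonneg hq0 _) hc.le
          _ ≤ l w := h1
      · have hwmem : r₁ < Metric.infDist w M := by
          have h3 : min r 1 ≤ r := min_le_left _ _
          have h4 : (0:ℝ) < min r 1 := lt_min hr one_pos
          rw [hr₁def]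
          linarith
        have hmem : l w ∈ lOf f flo '' {y : Euc n | r₁ < Metric.infDist y (MOf f flo)} :=
          ⟨w, hwmem, rfl⟩
        have hbdd : BddBelow (lOf f flo '' {y : Euc n | r₁ < Metric.infDist y (MOf f flo)}) :=
          ⟨0, fun v hv => by
            obtain ⟨y, _, hy⟩ := hv
            rw [← hy]
            exact Real.sqrt_nonneg _⟩
        have h3 : γ r₁ ≤ l w := le_of_lt (lt_of_lt_of_le hγlt (csInf_le hbdd hmem))
        have h4 : q ^ β ≤ 1 := Real.rpow_le_one hq0 (hqr.trans hr₁le) hβ0.le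
        calc cl * q ^ β ≤ γ r₁ * 1 :=
              mul_le_mul (min_le_right _ _) h4 (Real.rpow_nonneg hq0 _) hγ0.le
          _ = γ r₁ := mul_one _
          _ ≤ l w := h3
    have part1 : ∀ x : Euc n, ∀ α : ℝ → Euc n, IsOptimal M l x α → hitTime M x α ≠ ⊤ :=
      fun x α hopt => S19.hit_finite hMc hMne hlcont hl0 hcl hβ0 hβ hr₁0 hK1 hAhyp hvup hopt
    have h1θ : (0:ℝ) < 1 - 2*β/3 := by linarith
    refine ⟨part1, K / cl, by positivity, r₁, hr₁0, ?_⟩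
    intro x hx α hopt
    set d₀ := infDist x M with hd₀def
    have hd₀0 : (0:ℝ) ≤ d₀ := infDist_nonneg
    set W := K / cl / (1 - 2 * β / 3) * d₀ ^ ((3:ℝ)/2 - β) with hWdef
    have hW0 : (0:ℝ) ≤ W := by positivity
    by_contra hcon
    push_neg at hcon
    have hVle : (valE M l x).toReal ≤ K * d₀ ^ ((3:ℝ)/2) := by
      have h5 := ENNReal.toReal_mono ENNReal.ofReal_ne_top (hvup x)
      rwa [ENNReal.toReal_ofReal
        (mul_nonneg hK0.le (Real.rpow_nonneg hd₀0 _))] at h5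
    have hFzero : S19.Fc l x α 0 = 0 := intervalIntegral.integral_same
    have hsmall : (valE M l x).toReal - S19.Fc l x α 0 ≤ K * r₁ ^ ((3:ℝ)/2) := by
      rw [hFzero, sub_zero]
      have h2 : d₀ ^ ((3:ℝ)/2) ≤ r₁ ^ ((3:ℝ)/2) :=
        Real.rpow_le_rpow hd₀0 hx (by norm_num)
      nlinarith
    have hesc := S19.escape hMc hMne hlcont hl0 hcl hβ0 hβ hr₁0 hK1 hAhyp hvup hopt
      le_rfl hW0 hcon hsmall
    rw [hFzero, sub_zero, sub_zero] at hesc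
    have hbnd : (valE M l x).toReal ^ (1 - 2*β/3)
        / ((cl / K ^ (2*β/3)) * (1 - 2*β/3)) ≤ W := by
      have hKθ : (0:ℝ) < K ^ (2*β/3) := Real.rpow_pos_of_pos hK0 _
      have hden : (0:ℝ) < (cl / K ^ (2*β/3)) * (1 - 2*β/3) := by positivity
      have h1 : (valE M l x).toReal ^ (1 - 2*β/3) ≤ (K * d₀ ^ ((3:ℝ)/2)) ^ (1 - 2*β/3) :=
        Real.rpow_le_rpow ENNReal.toReal_nonneg hVle (by linarith)
      have h2 : (K * d₀ ^ ((3:ℝ)/2)) ^ (1 - 2*β/3)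
          = K ^ (1 - 2*β/3) * d₀ ^ ((3:ℝ)/2 - β) := by
        rw [Real.mul_rpow hK0.le (Real.rpow_nonneg hd₀0 _),
          ← Real.rpow_mul hd₀0]
        congr 1
        ring
      have hKmul : K ^ (1 - 2*β/3) * K ^ (2*β/3) = K := by
        rw [← Real.rpow_add hK0]
        norm_num
      have hEQ : (K ^ (1 - 2*β/3) * d₀ ^ ((3:ℝ)/2 - β))
          / ((cl / K ^ (2*β/3)) * (1 - 2*β/3)) = W := by
        rw [show (cl / K ^ (2*β/3)) * (1 - 2*β/3)
            = cl * (1 - 2*β/3) / K ^ (2*β/3) by ring,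
          div_div_eq_mul_div, mul_right_comm, hKmul, hWdef, div_div,
          div_mul_eq_mul_div]
      calc (valE M l x).toReal ^ (1 - 2*β/3) / ((cl / K ^ (2*β/3)) * (1 - 2*β/3))
          ≤ (K ^ (1 - 2*β/3) * d₀ ^ ((3:ℝ)/2 - β))
              / ((cl / K ^ (2*β/3)) * (1 - 2*β/3)) :=
            div_le_div_of_nonneg_right (h1.trans_eq h2) hden.le
        _ = W := hEQ
    linarith

end

/-- with `ℓ(x) = √(2(f(x)-f̲))`, `f` satisfying (A), (B), `ℓ` satisfying
(H), and `ℓ(x) ≥ c·dist(x,𝔐)^β` near `𝔐` with `0 < β < 3/2`, every optimal control has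
finite hitting time; moreover there are `C > 0` and `r₀ > 0` such that for
`dist(x,𝔐) ≤ r₀` the hitting time is at most `(C/(1-2β/3))·dist(x,𝔐)^{3/2-β}`. -/
theorem stmt19 {n : ℕ} (f : Euc n → ℝ) (flo fhi C1 C2 : ℝ)
    (hcont : Continuous f) (hlo : ∀ x, flo ≤ f x) (hhi : ∀ x, f x ≤ fhi)
    (hattain : ∃ x, f x = flo)
    (hlip : ∀ x y : Euc n, |f x - f y| ≤ C1 * dist x y)
    (hsc : ∀ x h : Euc n, f (x + h) + f (x - h) - 2 * f x ≤ C2 * ‖h‖ ^ 2)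
    (γ : ℝ → ℝ)
    (hH : ∀ δ : ℝ, 0 < δ → 0 < γ δ ∧
      γ δ < sInf (lOf f flo '' {y : Euc n | δ < Metric.infDist y (MOf f flo)}))
    (c r β : ℝ) (hc : 0 < c) (hr : 0 < r) (hβ0 : 0 < β) (hβ : β < 3 / 2)
    (hlow : ∀ x : Euc n, Metric.infDist x (MOf f flo) ≤ r →
      c * Metric.infDist x (MOf f flo) ^ β ≤ lOf f flo x) :
    (∀ x : Euc n, ∀ α : ℝ → Euc n, IsOptimal (MOf f flo) (lOf f flo) x α →
      hitTime (MOf f flo) x α ≠ ⊤) ∧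
    ∃ C : ℝ, 0 < C ∧ ∃ r₀ : ℝ, 0 < r₀ ∧
      ∀ x : Euc n, Metric.infDist x (MOf f flo) ≤ r₀ →
        ∀ α : ℝ → Euc n, IsOptimal (MOf f flo) (lOf f flo) x α →
          hitTime (MOf f flo) x α ≤
            ENNReal.ofReal ((C / (1 - 2 * β / 3)) *
              Metric.infDist x (MOf f flo) ^ ((3 : ℝ) / 2 - β)) :=
  stmt19_aux f flo fhi C1 C2 hcont hlo hhi hattain hlip hsc γ hH c r β hc hr hβ0 hβ hlow
end
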